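/- Let K be a field of characteristic zero and consider the K-vector space L = K[x, x⁻¹] of Laurent polynomials, equipped with the operators X (multiplication by x) and D (formal differentiation d/dx). Then the smallest K-subspace of L containing x⁻¹ and closed under X and D is all of L. -/

import Mathlib

open LaurentPolynomial

/-- Formal differentiation `d/dx` on Laurent polynomials, sending `x^n` to `n·x^{n-1}`. -/
noncomputable def laurentDeriv {K : Type} [Field K] (p : LaurentPolynomial K) :
    LaurentPolynomial K :=
  Finsupp.sum p.coeff fun n a => ((n : K) * a) • LaurentPolynomial.T (n - 1)

lemma laurentDeriv_T {K : Type} [Field K] (n : ℤ) :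
    laurentDeriv (LaurentPolynomial.T n : LaurentPolynomial K) = (n : K) • T (n - 1) := by
  unfold laurentDeriv
  rw [LaurentPolynomial.T, AddMonoidAlgebra.coeff_single, Finsupp.sum_single_index] <;> simp

/-- the smallest `K`-subspace of `K[x,x⁻¹]` containing `x⁻¹` and closed
under multiplication by `x` and under `d/dx` is everything. -/
theorem span_inv_x_closed_under_X_D_eq_top {K : Type} [Field K] [CharZero K]
    (V : Submodule K (LaurentPolynomial K))
    (hmem : LaurentPolynomial.T (-1) ∈ V)
    (hX : ∀ p ∈ V, LaurentPolynomial.T 1 * p ∈ V)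
    (hD : ∀ p ∈ V, laurentDeriv p ∈ V) :
    V = ⊤ := by
  have hT : ∀ n : ℤ, (LaurentPolynomial.T n : LaurentPolynomial K) ∈ V := by
    have hup : ∀ k : ℕ, (LaurentPolynomial.T ((k : ℤ) - 1) : LaurentPolynomial K) ∈ V := by
      intro k
      induction k with
      | zero => simpa using hmem
      | succ m ih =>
          have := hX _ ih
          rw [← LaurentPolynomial.T_add] at this
          convert this using 2
          push_cast; ring
    have hdown : ∀ k : ℕ, (LaurentPolynomial.T (-(k : ℤ) - 1) : LaurentPolynomial K) ∈ V := by
      intro k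
      induction k with
      | zero => simpa using hmem
      | succ m ih =>
          have hd := hD _ ih
          rw [laurentDeriv_T] at hd
          have hne : ((-(m : ℤ) - 1 : ℤ) : K) ≠ 0 := by
            have : (-(m : ℤ) - 1 : ℤ) ≠ 0 := by omega
            exact_mod_cast this
          have := V.smul_mem (((-(m : ℤ) - 1 : ℤ) : K))⁻¹ hd
          rw [smul_smul, inv_mul_cancel₀ hne, one_smul] at this
          convert this using 2
          push_cast; ring
    intro n
    rcases le_or_gt 0 (n + 1) with h | h
    · have : ((n + 1).toNat : ℤ) - 1 = n := by omega
      have h1 := hup (n + 1).toNat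
      rwa [this] at h1
    · have : (-((-(n + 1)).toNat : ℤ)) - 1 = n := by omega
      have h1 := hdown (-(n + 1)).toNat
      rwa [this] at h1
  have : ∀ p : LaurentPolynomial K, p ∈ V := by
    intro p
    have hp : p = Finsupp.sum p.coeff fun n a => a • (LaurentPolynomial.T n : LaurentPolynomial K) := by
      conv_lhs => rw [← AddMonoidAlgebra.sum_coeff_single p]
      refine Finsupp.sum_congr fun n _ => ?_
      rw [LaurentPolynomial.T, AddMonoidAlgebra.smul_single, smul_eq_mul, mul_one]
    rw [hp]
    exact Submodule.sum_mem V fun n _ => V.smul_mem _ (hT n)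
  exact Submodule.eq_top_iff'.mpr this
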